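/- Suppose a sequence (T_q)_{q≥0} of functions satisfies T_0 = 1 and the fusion hierarchy T_q(u)·T_1(u+qλ) = T_{q+1}(u) + f(u+(q-1)λ)·T_{q-1}(u) for all q ≥ 1 and all u. Define t_q(u) = T_{q+1}(u)·T_{q-1}(u+λ) / ∏_{k=0}^{q-1} f(u+kλ) for q ≥ 1 and t_0 = 0, assuming ∏_{k=0}^{q-1} f(u+kλ) ≠ 0. Then the TBA relations hold: t_q(u)·t_q(u+λ) = (1 + t_{q+1}(u))·(1 + t_{q-1}(u+λ)) for all q ≥ 1. -/

import Mathlib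

open Finset

theorem fusion_TBA (lam : ℂ) (f : ℂ → ℂ) (hf : ∀ u, f u ≠ 0)
    (T : ℕ → ℂ → ℂ) (t : ℕ → ℂ → ℂ)
    (hT0 : ∀ u, T 0 u = 1)
    (hfus : ∀ q : ℕ, ∀ u, T (q + 1) u * T 1 (u + (q + 1) * lam) =
      T (q + 2) u + f (u + q * lam) * T q u)
    (ht0 : ∀ u, t 0 u = 0)
    (ht : ∀ q : ℕ, ∀ u, t (q + 1) u =
      T (q + 2) u * T q (u + lam) / ∏ k ∈ range (q + 1), f (u + k * lam)) :
    ∀ q : ℕ, ∀ u, t (q + 1) u * t (q + 1) (u + lam) =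
      (1 + t (q + 2) u) * (1 + t q (u + lam)) := by
  -- nonvanishing of the products
  have hPne : ∀ n : ℕ, ∀ u, (∏ k ∈ range n, f (u + k * lam)) ≠ 0 := by
    intro n u
    exact prod_ne_zero_iff.mpr fun k _ => hf _
  -- T-system (Hirota bilinear relation)
  have hTsys : ∀ q : ℕ, ∀ u, T (q + 1) u * T (q + 1) (u + lam) =
      T (q + 2) u * T q (u + lam) + ∏ k ∈ range (q + 1), f (u + k * lam) := by
    intro q
    induction q with
    | zero =>
      intro u
      have h := hfus 0 u
      simp [hT0] at h ⊢
      ring_nf at h ⊢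
      linear_combination h
    | succ p ih =>
      intro u
      have h1 := hfus (p + 1) u
      have h2 := hfus p (u + lam)
      have ihu := ih u
      rw [prod_range_succ]
      push_cast at h1 h2 ihu ⊢
      have e1 : u + lam + (↑p + 1) * lam = u + (↑p + 1 + 1) * lam := by ring
      have e2 : u + lam + ↑p * lam = u + (↑p + 1) * lam := by ring
      rw [e1, e2] at h2
      linear_combination T (p + 1) (u + lam) * h1 - T (p + 2) u * h2
        + f (u + (↑p + 1) * lam) * ihu
  -- 1 + t relation
  have hone : ∀ q : ℕ, ∀ u, 1 + t (q + 1) u =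
      T (q + 1) u * T (q + 1) (u + lam) / ∏ k ∈ range (q + 1), f (u + k * lam) := by
    intro q u
    rw [ht q u, eq_div_iff (hPne _ _), add_mul, one_mul,
      div_mul_cancel₀ _ (hPne _ _)]
    linear_combination -hTsys q u
  intro q u
  match q with
  | 0 =>
    have key := hTsys 1 u
    rw [ht0, ht 0 u, ht 0 (u + lam), hone 1 u]
    simp only [hT0, prod_range_one, prod_range_succ, prod_range_zero, one_mul,
      mul_one] at key ⊢
    push_cast at key ⊢
    ring_nf at key ⊢
  | p + 1 =>
    rw [ht (p + 1) u, ht (p + 1) (u + lam), hone (p + 2) u, hone p (u + lam)]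
    have key1 : (∏ k ∈ range (p + 3), f (u + k * lam)) =
        (∏ k ∈ range (p + 2), f (u + k * lam)) * f (u + (p + 2) * lam) := by
      rw [prod_range_succ]; congr 2; push_cast; ring
    have key2 : (∏ k ∈ range (p + 2), f (u + lam + k * lam)) =
        (∏ k ∈ range (p + 1), f (u + lam + k * lam)) * f (u + (p + 2) * lam) := by
      rw [prod_range_succ]
      congr 1
      push_cast; ring_nf
    rw [key1, key2]
    field_simp [hPne, hf]
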